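/- arXiv:0904.0722 — 2 statements merged into one kernel-verified Lean document; each statement's English description precedes it below -/
import Mathlib

section
/- Let O ⊆ ℝ^M be a bounded open set, g : ℝ → (-∞, ∞] a lower semicontinuous convex function, and (v_n) a sequence in L¹(O) with v_n ⇀ v weakly in L¹(O), g(v_n) ∈ L¹(O) for each n, and g(v_n) ⇀ ḡ weakly in L¹(O). Then g(v) ≤ ḡ almost everywhere on O, g(v) ∈ L¹(O), and ∫_O g(v) dy ≤ liminf_{n→∞} ∫_O g(v_n) dy. -/
open MeasureTheory Filter Set Topology

noncomputable def csl (g : ℝ → ℝ) (q : ℝ) : ℝ :=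
  sInf ((fun r => (g r - g q) / (r - q)) '' Set.Ioi q)

lemma csl_bddBelow {g : ℝ → ℝ} (hg : ConvexOn ℝ Set.univ g) (q : ℝ) :
    BddBelow ((fun r => (g r - g q) / (r - q)) '' Set.Ioi q) := by
  refine ⟨(g (q - 1) - g q) / (q - 1 - q), ?_⟩
  rintro s ⟨r, hr, rfl⟩
  exact hg.secant_mono (Set.mem_univ q) (Set.mem_univ _) (Set.mem_univ _)
    (by norm_num) (ne_of_gt (Set.mem_Ioi.mp hr)) (by linarith [Set.mem_Ioi.mp hr])

lemma csl_le {g : ℝ → ℝ} (hg : ConvexOn ℝ Set.univ g) {q r : ℝ} (h : q < r) :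
    csl g q ≤ (g r - g q) / (r - q) :=
  csInf_le (csl_bddBelow hg q) ⟨r, h, rfl⟩

lemma le_csl {g : ℝ → ℝ} (hg : ConvexOn ℝ Set.univ g) {x q : ℝ} (h : x < q) :
    (g x - g q) / (x - q) ≤ csl g q := by
  refine le_csInf ⟨_, ⟨q + 1, by simp, rfl⟩⟩ ?_
  rintro s ⟨r, hr, rfl⟩
  exact hg.secant_mono (Set.mem_univ q) (Set.mem_univ _) (Set.mem_univ _)
    (ne_of_lt h) (ne_of_gt (Set.mem_Ioi.mp hr)) (by linarith [Set.mem_Ioi.mp hr])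

lemma csl_minorant {g : ℝ → ℝ} (hg : ConvexOn ℝ Set.univ g) (q x : ℝ) :
    g q + csl g q * (x - q) ≤ g x := by
  rcases lt_trichotomy x q with h | h | h
  · have h1 := le_csl hg h
    have h2 : x - q < 0 := by linarith
    have := mul_le_mul_of_nonpos_right h1 h2.le
    rw [div_mul_cancel₀ _ (by linarith : x - q ≠ 0)] at this
    linarith
  · simp [h]
  · have h1 := csl_le hg h
    have h2 : (0:ℝ) < x - q := by linarith
    have := mul_le_mul_of_nonneg_right h1 h2.le
    rw [div_mul_cancel₀ _ (by linarith : x - q ≠ 0)] at this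
    linarith

lemma csl_approx {g : ℝ → ℝ} (hg : ConvexOn ℝ Set.univ g) (hlsc : LowerSemicontinuous g)
    (t : ℝ) {ε : ℝ} (hε : 0 < ε) :
    ∃ q : ℚ, g t - ε < g (q : ℝ) + csl g (q : ℝ) * (t - q) := by
  have hev := hlsc t (g t - ε / 2) (by linarith)
  rw [Metric.eventually_nhds_iff] at hev
  obtain ⟨δ, hδ, hδ'⟩ := hev
  set K : ℝ := |g (t + 1) - g t + ε / 2| + 1 with hK
  have hK0 : 0 < K := by positivity
  set η : ℝ := min (min δ (1 / 2)) (ε / (4 * K)) with hη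
  have hη0 : 0 < η := by
    apply lt_min (lt_min hδ (by norm_num)) (by positivity)
  obtain ⟨q, hq1, hq2⟩ := exists_rat_btwn (lt_add_of_pos_right t hη0)
  have hqδ : |(q : ℝ) - t| < δ := by
    rw [abs_of_pos (by linarith)]
    calc (q:ℝ) - t < η := by linarith
    _ ≤ δ := le_trans (min_le_left _ _) (min_le_left _ _)
  have hgq : g t - ε / 2 < g (q : ℝ) := by
    exact hδ' (by rwa [Real.dist_eq])
  have hqhalf : (q : ℝ) < t + 1 / 2 := by
    have : η ≤ 1 / 2 := le_trans (min_le_left _ _) (min_le_right _ _)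
    linarith
  have hcq : csl g (q : ℝ) * ((q : ℝ) - t) ≤ ε / 2 := by
    rcases le_or_gt (csl g (q : ℝ)) 0 with hc | hc
    · have : csl g (q : ℝ) * ((q : ℝ) - t) ≤ 0 :=
        mul_nonpos_of_nonpos_of_nonneg hc (by linarith)
      linarith
    · have h1 : csl g (q : ℝ) ≤ (g (t + 1) - g (q : ℝ)) / (t + 1 - (q : ℝ)) :=
        csl_le hg (by linarith)
      have hd : (1:ℝ)/2 ≤ t + 1 - (q : ℝ) := by linarith
      have hnum : 0 < g (t + 1) - g (q : ℝ) := by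
        by_contra hcon
        push_neg at hcon
        have : (g (t + 1) - g (q : ℝ)) / (t + 1 - (q : ℝ)) ≤ 0 :=
          div_nonpos_of_nonpos_of_nonneg (by linarith) (by linarith)
        linarith
      have hnumK : g (t + 1) - g (q : ℝ) ≤ K := by
        have h3 : g (t + 1) - g (q : ℝ) < g (t + 1) - g t + ε / 2 := by linarith
        have h2 : g (t + 1) - g t + ε / 2 ≤ K := by
          rw [hK]; linarith [le_abs_self (g (t + 1) - g t + ε / 2)]
        exact (h3.trans_le h2).le
      have h2K : csl g (q : ℝ) ≤ 2 * K := by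
        calc csl g (q : ℝ) ≤ (g (t + 1) - g (q : ℝ)) / (t + 1 - (q : ℝ)) := h1
        _ ≤ K / (1 / 2) := div_le_div₀ hK0.le hnumK (by norm_num) hd
        _ = 2 * K := by ring
      have hqt : (q : ℝ) - t ≤ ε / (4 * K) := by
        have : η ≤ ε / (4 * K) := min_le_right _ _
        linarith
      calc csl g (q : ℝ) * ((q : ℝ) - t) ≤ (2 * K) * (ε / (4 * K)) := by
            apply mul_le_mul h2K hqt (by linarith) (by linarith)
      _ = ε / 2 := by field_simp; ring
  refine ⟨q, ?_⟩
  have : g (q : ℝ) + csl g (q : ℝ) * (t - q) = g (q : ℝ) - csl g (q : ℝ) * ((q : ℝ) - t) := by ring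
  rw [this]
  linarith

lemma csl_sup {g : ℝ → ℝ} (hg : ConvexOn ℝ Set.univ g) (hlsc : LowerSemicontinuous g)
    {t y : ℝ} (h : ∀ q : ℚ, g (q : ℝ) + csl g (q : ℝ) * (t - q) ≤ y) : g t ≤ y := by
  by_contra hcon
  push_neg at hcon
  obtain ⟨q, hq⟩ := csl_approx hg hlsc t (show (0:ℝ) < g t - y by linarith)
  have := h q
  linarith

/-- weak lower semicontinuity of convex integrands under weak L¹
convergence. -/
theorem stmt0
    (M : ℕ) (O : Set (EuclideanSpace ℝ (Fin M)))
    (hO : IsOpen O) (hOb : Bornology.IsBounded O)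
    (g : ℝ → ℝ) (hgc : ConvexOn ℝ Set.univ g) (hglsc : LowerSemicontinuous g)
    (v : ℕ → EuclideanSpace ℝ (Fin M) → ℝ) (vlim gbar : EuclideanSpace ℝ (Fin M) → ℝ)
    (hvint : ∀ n, IntegrableOn (v n) O)
    (hvlimint : IntegrableOn vlim O)
    (hgbarint : IntegrableOn gbar O)
    (hgvint : ∀ n, IntegrableOn (fun x => g (v n x)) O)
    (hweakv : ∀ φ : EuclideanSpace ℝ (Fin M) → ℝ, Measurable φ → (∃ C, ∀ x, |φ x| ≤ C) →
      Tendsto (fun n => ∫ x in O, v n x * φ x) atTop (𝓝 (∫ x in O, vlim x * φ x)))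
    (hweakg : ∀ φ : EuclideanSpace ℝ (Fin M) → ℝ, Measurable φ → (∃ C, ∀ x, |φ x| ≤ C) →
      Tendsto (fun n => ∫ x in O, g (v n x) * φ x) atTop (𝓝 (∫ x in O, gbar x * φ x))) :
    (∀ᵐ x ∂(volume.restrict O), g (vlim x) ≤ gbar x) ∧
      IntegrableOn (fun x => g (vlim x)) O ∧
      (∫ x in O, g (vlim x)) ≤ liminf (fun n => ∫ x in O, g (v n x)) atTop := by
  have hvolO : volume O < ⊤ := hOb.measure_lt_top
  haveI : IsFiniteMeasure (volume.restrict O) :=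
    ⟨by rwa [Measure.restrict_apply_univ]⟩
  have hconst : ∀ c : ℝ, IntegrableOn (fun _ => c) O := fun c =>
    integrableOn_const hvolO.ne
  -- Step A: affine minorant transfers to the weak limits
  have key : ∀ a b : ℝ, (∀ t : ℝ, a * t + b ≤ g t) →
      ∀ᵐ x ∂(volume.restrict O), a * vlim x + b ≤ gbar x := by
    intro a b hab
    have hLint : IntegrableOn (fun x => a * vlim x + b) O :=
      (hvlimint.const_mul a).add (hconst b)
    have hLnint : ∀ n, IntegrableOn (fun x => a * v n x + b) O := fun n =>
      ((hvint n).const_mul a).add (hconst b)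
    have hfint : Integrable (fun x => gbar x - (a * vlim x + b)) (volume.restrict O) :=
      hgbarint.sub hLint
    have h0 := ae_nonneg_of_forall_setIntegral_nonneg hfint ?_
    · filter_upwards [h0] with x hx
      simpa [sub_nonneg] using hx
    intro s hs _
    set φ : EuclideanSpace ℝ (Fin M) → ℝ := s.indicator (fun _ => (1:ℝ)) with hφ
    have hφm : Measurable φ := measurable_const.indicator hs
    have hφb : ∃ C, ∀ x, |φ x| ≤ C :=
      ⟨1, fun x => by by_cases h : x ∈ s <;> simp [hφ, h]⟩
    have hφ0 : ∀ x, 0 ≤ φ x := fun x => by by_cases h : x ∈ s <;> simp [hφ, h]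
    have hmul : ∀ (f : EuclideanSpace ℝ (Fin M) → ℝ), IntegrableOn f O →
        IntegrableOn (fun x => f x * φ x) O := by
      intro f hf
      have h1 : Integrable (fun x => φ x * f x) (volume.restrict O) :=
        hf.bdd_mul (c := 1) hφm.aestronglyMeasurable
          (Filter.Eventually.of_forall fun x => by
            rw [Real.norm_eq_abs]
            by_cases h : x ∈ s <;> simp [hφ, h])
      exact h1.congr (Filter.Eventually.of_forall fun x => mul_comm _ _)
    have hφint : IntegrableOn φ O := by
      have := hmul (fun _ => 1) (hconst 1)
      simpa using this
    have hsplit : ∀ (w : EuclideanSpace ℝ (Fin M) → ℝ), IntegrableOn w O →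
        (∫ x in O, (a * w x + b) * φ x) =
          a * (∫ x in O, w x * φ x) + b * (∫ x in O, φ x) := by
      intro w hw
      have h1 : IntegrableOn (fun x => w x * φ x) O := hmul _ hw
      calc (∫ x in O, (a * w x + b) * φ x)
          = ∫ x in O, (a * (w x * φ x) + b * φ x) := by
            congr 1; funext x; ring
        _ = (∫ x in O, a * (w x * φ x)) + ∫ x in O, b * φ x :=
            integral_add (h1.const_mul a) (hφint.const_mul b)
        _ = a * (∫ x in O, w x * φ x) + b * (∫ x in O, φ x) := by
            rw [integral_const_mul, integral_const_mul]
    have hT1 := hweakv φ hφm hφb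
    have hT2 := hweakg φ hφm hφb
    have hTL : Tendsto (fun n => ∫ x in O, (a * v n x + b) * φ x) atTop
        (𝓝 (∫ x in O, (a * vlim x + b) * φ x)) := by
      rw [hsplit vlim hvlimint]
      have hfe : (fun n => ∫ x in O, (a * v n x + b) * φ x)
          = fun n => a * (∫ x in O, v n x * φ x) + b * (∫ x in O, φ x) :=
        funext fun n => hsplit (v n) (hvint n)
      rw [hfe]
      exact (hT1.const_mul a).add_const _
    have hineq : ∀ n, (∫ x in O, (a * v n x + b) * φ x) ≤ ∫ x in O, g (v n x) * φ x := by
      intro n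
      refine integral_mono_ae (hmul _ (hLnint n)) (hmul _ (hgvint n)) ?_
      filter_upwards with x
      exact mul_le_mul_of_nonneg_right (hab (v n x)) (hφ0 x)
    have hlimle : (∫ x in O, (a * vlim x + b) * φ x) ≤ ∫ x in O, gbar x * φ x :=
      le_of_tendsto_of_tendsto' hTL hT2 hineq
    have hindeq : Set.indicator s (fun x => gbar x - (a * vlim x + b))
        = fun x => gbar x * φ x - (a * vlim x + b) * φ x := by
      funext x; by_cases h : x ∈ s <;> simp [hφ, h]
    rw [← integral_indicator hs, hindeq,
      integral_sub (hmul _ hgbarint) (hmul _ hLint)]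
    linarith
  -- Step B: a.e. pointwise inequality
  have haeq : ∀ᵐ x ∂(volume.restrict O),
      ∀ q : ℚ, g (q:ℝ) + csl g (q:ℝ) * (vlim x - q) ≤ gbar x := by
    rw [ae_all_iff]
    intro q
    have h := key (csl g (q:ℝ)) (g (q:ℝ) - csl g (q:ℝ) * (q:ℝ)) (fun t => by
      have hm := csl_minorant hgc (q:ℝ) t
      have he : csl g (q:ℝ) * t + (g (q:ℝ) - csl g (q:ℝ) * (q:ℝ))
          = g (q:ℝ) + csl g (q:ℝ) * (t - q) := by ring
      rw [he]; exact hm)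
    filter_upwards [h] with x hx
    have he : g (q:ℝ) + csl g (q:ℝ) * (vlim x - q)
        = csl g (q:ℝ) * vlim x + (g (q:ℝ) - csl g (q:ℝ) * (q:ℝ)) := by ring
    rw [he]; exact hx
  have hae : ∀ᵐ x ∂(volume.restrict O), g (vlim x) ≤ gbar x := by
    filter_upwards [haeq] with x hx
    exact csl_sup hgc hglsc hx
  -- Step C: integrability
  have hgm : Measurable g := hglsc.measurable
  have hgvm : AEStronglyMeasurable (fun x => g (vlim x)) (volume.restrict O) :=
    (hgm.comp_aemeasurable hvlimint.aemeasurable).aestronglyMeasurable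
  have hL0 : IntegrableOn (fun x => g 0 + csl g 0 * vlim x) O :=
    (hconst (g 0)).add (hvlimint.const_mul _)
  have hint : IntegrableOn (fun x => g (vlim x)) O := by
    refine Integrable.mono' (g := fun x => |gbar x| + |g 0 + csl g 0 * vlim x|)
      (hgbarint.abs.add hL0.abs) hgvm ?_
    filter_upwards [hae] with x hx
    have hlow := csl_minorant hgc 0 (vlim x)
    simp only [sub_zero] at hlow
    rw [Real.norm_eq_abs, abs_le]
    constructor
    · linarith [neg_abs_le (g 0 + csl g 0 * vlim x), abs_nonneg (gbar x)]
    · linarith [le_abs_self (gbar x), abs_nonneg (g 0 + csl g 0 * vlim x)]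
  refine ⟨hae, hint, ?_⟩
  -- Step D
  have hT := hweakg (fun _ => 1) measurable_const ⟨1, fun x => by norm_num⟩
  simp only [mul_one] at hT
  rw [hT.liminf_eq]
  exact integral_mono_ae hint hgbarint hae
end

section
/- Let O ⊆ ℝ^M be a bounded open set and g : ℝ → ℝ a convex function that is strictly convex on an open interval (a,b) ⊆ ℝ. Suppose v_n ⇀ v and g(v_n) ⇀ ḡ weakly in L¹(O), and ḡ = g(v) almost everywhere on O. Then, after passing to a subsequence, v_n(y) → v(y) for almost every y in the set {y ∈ O : v(y) ∈ (a,b)}. -/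
open MeasureTheory Filter Set Topology

private lemma slope_symm (g : ℝ → ℝ) (u w : ℝ) :
    (g w - g u) / (w - u) = (g u - g w) / (u - w) := by
  rw [← neg_div_neg_eq, neg_sub, neg_sub]

private lemma slope_le_slope {g : ℝ → ℝ} (hg : ConvexOn ℝ Set.univ g) {x1 y1 x2 y2 : ℝ}
    (hx : x1 ≤ x2) (hy : y1 ≤ y2) (h1 : x1 < y1) (h2 : x2 < y2) :
    (g y1 - g x1) / (y1 - x1) ≤ (g y2 - g x2) / (y2 - x2) := by
  have A : (g y1 - g x1) / (y1 - x1) ≤ (g y2 - g x1) / (y2 - x1) :=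
    hg.secant_mono trivial trivial trivial h1.ne' ((h1.trans_le hy)).ne' hy
  have B : (g x1 - g y2) / (x1 - y2) ≤ (g x2 - g y2) / (x2 - y2) :=
    hg.secant_mono trivial trivial trivial (h1.trans_le hy).ne (h2.ne) hx
  rw [slope_symm g y2 x1, slope_symm g y2 x2] at B
  linarith

/-- a choice of subgradient for a convex function on ℝ -/
private noncomputable def sg (g : ℝ → ℝ) (c : ℝ) : ℝ :=
  sInf ((fun t => (g t - g c) / (t - c)) '' Set.Ioi c)

section sg
variable {g : ℝ → ℝ} (hg : ConvexOn ℝ Set.univ g)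
include hg

private lemma sg_bddBelow (c : ℝ) :
    BddBelow ((fun t => (g t - g c) / (t - c)) '' Set.Ioi c) := by
  refine ⟨(g c - g (c - 1)) / (c - (c - 1)), ?_⟩
  rintro x ⟨t, ht, rfl⟩
  exact slope_le_slope hg (by linarith) (le_of_lt ht) (by linarith) ht

private lemma sg_le_slope (c t : ℝ) (ht : c < t) : sg g c ≤ (g t - g c) / (t - c) :=
  csInf_le (sg_bddBelow hg c) ⟨t, ht, rfl⟩

private lemma slope_le_sg (c w : ℝ) (hw : w < c) : (g c - g w) / (c - w) ≤ sg g c := by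
  refine le_csInf ⟨(g (c + 1) - g c) / (c + 1 - c), ⟨c + 1, by simp, rfl⟩⟩ ?_
  rintro x ⟨t, ht, rfl⟩
  exact slope_le_slope hg hw.le (le_of_lt ht) hw ht

private lemma sg_subgrad (c w : ℝ) : g c + sg g c * (w - c) ≤ g w := by
  rcases lt_trichotomy w c with h | rfl | h
  · have h1 : (g c - g w) / (c - w) ≤ sg g c := slope_le_sg hg c w h
    have h2 : 0 < c - w := by linarith
    rw [div_le_iff₀ h2] at h1
    nlinarith [h1]
  · simp
  · have h1 : sg g c ≤ (g w - g c) / (w - c) := sg_le_slope hg c w h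
    have h2 : 0 < w - c := by linarith
    rw [le_div_iff₀ h2] at h1
    nlinarith [h1]

private lemma sg_mono : Monotone (sg g) := by
  intro c1 c2 h
  rcases eq_or_lt_of_le h with rfl | h
  · exact le_refl _
  refine le_csInf ⟨(g (c2 + 1) - g c2) / (c2 + 1 - c2), ⟨c2 + 1, by simp, rfl⟩⟩ ?_
  rintro x ⟨t, ht, rfl⟩
  calc sg g c1 ≤ (g c2 - g c1) / (c2 - c1) := sg_le_slope hg c1 c2 h
    _ ≤ (g t - g c2) / (t - c2) := slope_le_slope hg h.le (le_of_lt ht) h ht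

private lemma sg_abs_le {k c : ℝ} (hc : |c| ≤ k) :
    |sg g c| ≤ max |sg g (-k)| |sg g k| := by
  rw [abs_le] at hc
  have h1 : sg g (-k) ≤ sg g c := sg_mono hg (by linarith [hc.1])
  have h2 : sg g c ≤ sg g k := sg_mono hg (by linarith [hc.2])
  rcases le_or_gt 0 (sg g c) with h | h
  · exact le_max_of_le_right (by rw [abs_of_nonneg h]; exact h2.trans (le_abs_self _))
  · exact le_max_of_le_left (by rw [abs_of_neg h]; exact (neg_le_neg h1).trans (neg_le_abs _))

end sg

/-- the convexity gap at the midpoint of `u` and `c` -/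
private noncomputable def cgap (g : ℝ → ℝ) (c u : ℝ) : ℝ := (g u + g c) / 2 - g ((u + c) / 2)

section cgap
variable {g : ℝ → ℝ} (hg : ConvexOn ℝ Set.univ g)
include hg

private lemma cgap_nonneg (c u : ℝ) : 0 ≤ cgap g c u := by
  have h := hg.2 (Set.mem_univ u) (Set.mem_univ c) (by norm_num : (0:ℝ) ≤ 1/2)
    (by norm_num : (0:ℝ) ≤ 1/2) (by norm_num : (1:ℝ)/2 + 1/2 = 1)
  simp only [smul_eq_mul] at h
  have : (1:ℝ)/2 * u + 1/2 * c = (u + c)/2 := by ring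
  rw [this] at h
  unfold cgap; linarith

private lemma cgap_mono_right {c u1 u2 : ℝ} (hc : c ≤ u1) (h12 : u1 ≤ u2) :
    cgap g c u1 ≤ cgap g c u2 := by
  rcases eq_or_lt_of_le h12 with rfl | hlt
  · exact le_refl _
  have h := slope_le_slope hg (x1 := (u1 + c)/2) (y1 := (u2 + c)/2) (x2 := u1) (y2 := u2)
    (by linarith) (by linarith) (by linarith) hlt
  rw [div_le_div_iff₀ (by linarith) (by linarith)] at h
  unfold cgap
  nlinarith [h]

private lemma cgap_mono_left {c u1 u2 : ℝ} (h12 : u1 ≤ u2) (hc : u2 ≤ c) :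
    cgap g c u2 ≤ cgap g c u1 := by
  rcases eq_or_lt_of_le h12 with rfl | hlt
  · exact le_refl _
  have h := slope_le_slope hg (x1 := u1) (y1 := u2) (x2 := (u1 + c)/2) (y2 := (u2 + c)/2)
    (by linarith) (by linarith) hlt (by linarith)
  rw [div_le_div_iff₀ (by linarith) (by linarith)] at h
  unfold cgap
  nlinarith [h]

end cgap

private lemma cgap_pos {g : ℝ → ℝ} {a b : ℝ} (hgsc : StrictConvexOn ℝ (Set.Ioo a b) g)
    {c u : ℝ} (hc : c ∈ Set.Ioo a b) (hu : u ∈ Set.Ioo a b) (hne : u ≠ c) :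
    0 < cgap g c u := by
  have h := hgsc.2 hu hc hne (by norm_num : (0:ℝ) < 1/2)
    (by norm_num : (0:ℝ) < 1/2) (by norm_num : (1:ℝ)/2 + 1/2 = 1)
  simp only [smul_eq_mul] at h
  have : (1:ℝ)/2 * u + 1/2 * c = (u + c)/2 := by ring
  rw [this] at h
  unfold cgap; linarith

private lemma tendsto_of_cgap {g : ℝ → ℝ} (hg : ConvexOn ℝ Set.univ g) {a b : ℝ}
    (hgsc : StrictConvexOn ℝ (Set.Ioo a b) g) {c : ℝ} (hc : c ∈ Set.Ioo a b)
    {u : ℕ → ℝ} (hF : Tendsto (fun n => cgap g c (u n)) atTop (𝓝 0)) :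
    Tendsto u atTop (𝓝 c) := by
  rw [Metric.tendsto_atTop]
  intro ε hε
  obtain ⟨hca, hcb⟩ := hc
  set ε' : ℝ := min ε (min ((b - c)/2) ((c - a)/2)) with hε'def
  have hε' : 0 < ε' := by
    apply lt_min hε; apply lt_min <;> linarith
  have hε'ε : ε' ≤ ε := min_le_left _ _
  have h1 : ε' ≤ (b - c)/2 := le_trans (min_le_right _ _) (min_le_left _ _)
  have h2 : ε' ≤ (c - a)/2 := le_trans (min_le_right _ _) (min_le_right _ _)
  have hplus : c + ε' ∈ Set.Ioo a b := ⟨by linarith, by linarith⟩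
  have hminus : c - ε' ∈ Set.Ioo a b := ⟨by linarith, by linarith⟩
  set δ : ℝ := min (cgap g c (c + ε')) (cgap g c (c - ε')) with hδdef
  have hδ : 0 < δ :=
    lt_min (cgap_pos hgsc ⟨hca, hcb⟩ hplus (by linarith))
      (cgap_pos hgsc ⟨hca, hcb⟩ hminus (by linarith))
  have hev : ∀ᶠ n in atTop, cgap g c (u n) < δ := by
    have := Metric.tendsto_nhds.mp hF δ hδ
    filter_upwards [this] with n hn
    rw [Real.dist_eq, sub_zero] at hn
    exact lt_of_abs_lt hn
  rw [eventually_atTop] at hev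
  obtain ⟨N, hN⟩ := hev
  refine ⟨N, fun n hn => ?_⟩
  have hlt := hN n hn
  rw [Real.dist_eq, abs_lt]
  constructor
  · by_contra h
    push_neg at h
    have hle : u n ≤ c - ε' := by linarith
    have := cgap_mono_left hg (c := c) hle (by linarith)
    have := min_le_right (cgap g c (c + ε')) (cgap g c (c - ε'))
    linarith
  · by_contra h
    push_neg at h
    have hle : c + ε' ≤ u n := by linarith
    have := cgap_mono_right hg (c := c) (by linarith) hle
    have := min_le_left (cgap g c (c + ε')) (cgap g c (c - ε'))
    linarith

/-- a.e. convergence from strict convexity when the weak limit of the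
convex composition equals the composition of the weak limit. -/
theorem stmt1
    (M : ℕ) (O : Set (EuclideanSpace ℝ (Fin M)))
    (hO : IsOpen O) (hOb : Bornology.IsBounded O)
    (g : ℝ → ℝ) (hgc : ConvexOn ℝ Set.univ g)
    (a b : ℝ) (hab : a < b) (hgsc : StrictConvexOn ℝ (Set.Ioo a b) g)
    (v : ℕ → EuclideanSpace ℝ (Fin M) → ℝ) (vlim gbar : EuclideanSpace ℝ (Fin M) → ℝ)
    (hvint : ∀ n, IntegrableOn (v n) O)
    (hvlimint : IntegrableOn vlim O)
    (hgvint : ∀ n, IntegrableOn (fun x => g (v n x)) O)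
    (hgbarint : IntegrableOn gbar O)
    (hweakv : ∀ φ : EuclideanSpace ℝ (Fin M) → ℝ, Measurable φ → (∃ C, ∀ x, |φ x| ≤ C) →
      Tendsto (fun n => ∫ x in O, v n x * φ x) atTop (𝓝 (∫ x in O, vlim x * φ x)))
    (hweakg : ∀ φ : EuclideanSpace ℝ (Fin M) → ℝ, Measurable φ → (∃ C, ∀ x, |φ x| ≤ C) →
      Tendsto (fun n => ∫ x in O, g (v n x) * φ x) atTop (𝓝 (∫ x in O, gbar x * φ x)))
    (heq : ∀ᵐ x ∂(volume.restrict O), gbar x = g (vlim x)) :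
    ∃ φ : ℕ → ℕ, StrictMono φ ∧
      ∀ᵐ y ∂(volume.restrict O), vlim y ∈ Set.Ioo a b →
        Tendsto (fun n => v (φ n) y) atTop (𝓝 (vlim y)) := by
  classical
  set μ := volume.restrict O with hμdef
  haveI hfin : IsFiniteMeasure μ := by
    constructor
    rw [hμdef, Measure.restrict_apply_univ]
    exact hOb.measure_lt_top
  have hgcont : Continuous g := by
    have h := hgc.continuousOn_interior
    rw [interior_univ] at h
    exact continuousOn_univ.mp h
  have hvlimint' : Integrable vlim μ := hvlimint
  have hvint' : ∀ n, Integrable (v n) μ := hvint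
  have hgvint' : ∀ n, Integrable (fun x => g (v n x)) μ := hgvint
  obtain ⟨vl, hvlm, hvleq⟩ : ∃ vl, Measurable vl ∧ vlim =ᵐ[μ] vl :=
    ⟨hvlimint'.1.mk vlim, hvlimint'.1.stronglyMeasurable_mk.measurable, hvlimint'.1.ae_eq_mk⟩
  have hgvlim : Integrable (fun x => g (vlim x)) μ := (hgbarint : Integrable gbar μ).congr heq
  -- the midpoint functions
  have hwint : ∀ n, Integrable (fun x => (v n x + vlim x)/2) μ :=
    fun n => ((hvint' n).add hvlimint').div_const 2
  have hwm : ∀ n, AEStronglyMeasurable (fun x => (v n x + vlim x)/2) μ :=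
    fun n => (hwint n).1
  have hgw_meas : ∀ n, AEStronglyMeasurable (fun x => g ((v n x + vlim x)/2)) μ :=
    fun n => hgcont.comp_aestronglyMeasurable (hwm n)
  have hgw_le : ∀ n x, g ((v n x + vlim x)/2) ≤ (g (v n x) + g (vlim x))/2 := by
    intro n x
    have := cgap_nonneg hgc (vlim x) (v n x)
    unfold cgap at this; linarith
  have hgw_ge : ∀ n x, g 0 + sg g 0 * ((v n x + vlim x)/2) ≤ g ((v n x + vlim x)/2) := by
    intro n x
    have := sg_subgrad hgc 0 ((v n x + vlim x)/2)
    simpa using this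
  have hgwint : ∀ n, Integrable (fun x => g ((v n x + vlim x)/2)) μ := by
    intro n
    have hup : Integrable (fun x => (g (v n x) + g (vlim x))/2) μ :=
      ((hgvint' n).add hgvlim).div_const 2
    have hlo : Integrable (fun x => g 0 + sg g 0 * ((v n x + vlim x)/2)) μ :=
      (integrable_const _).add ((hwint n).const_mul _)
    refine Integrable.mono' (hup.abs.add hlo.abs) (hgw_meas n)
      (Filter.Eventually.of_forall fun x => ?_)
    have h1 := hgw_le n x
    have h2 := hgw_ge n x
    have h3 := le_abs_self ((g (v n x) + g (vlim x))/2)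
    have h4 := neg_abs_le (g 0 + sg g 0 * ((v n x + vlim x)/2))
    have h5 := abs_nonneg ((g (v n x) + g (vlim x))/2)
    have h6 := abs_nonneg (g 0 + sg g 0 * ((v n x + vlim x)/2))
    rw [Real.norm_eq_abs, abs_le]
    constructor <;> simp only [Pi.add_apply] <;> linarith
  -- Claim B : convergence of ∫ g(v n)
  have hclaimB : Tendsto (fun n => ∫ x, g (v n x) ∂μ) atTop (𝓝 (∫ x, g (vlim x) ∂μ)) := by
    have h := hweakg (fun _ => 1) measurable_const ⟨1, fun x => by norm_num⟩
    simp only [mul_one] at h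
    rwa [integral_congr_ae heq] at h
  -- Claim A : asymptotic lower bound for ∫ g(midpoint)
  have hclaimA : ∀ δ : ℝ, 0 < δ →
      ∀ᶠ n in atTop, ∫ x, g (vlim x) ∂μ - δ ≤ ∫ x, g ((v n x + vlim x)/2) ∂μ := by
    intro δ hδ
    set s0 := sg g 0 with hs0
    set B : ℕ → Set (EuclideanSpace ℝ (Fin M)) := fun k => {x | |vl x| ≤ (k:ℝ)} with hBdef
    have hBmeas : ∀ k, MeasurableSet (B k) := fun k => measurableSet_le hvlm.abs measurable_const
    have hBmono : Monotone B := by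
      intro k l hkl x hx
      simp only [hBdef, Set.mem_setOf_eq] at hx ⊢
      exact le_trans hx (Nat.cast_le.mpr hkl)
    have hBunion : (⋃ k, B k) = Set.univ := by
      ext x; simp only [Set.mem_iUnion, Set.mem_univ, iff_true]
      obtain ⟨k, hk⟩ := exists_nat_ge |vl x|
      exact ⟨k, hk⟩
    have hT1 : Tendsto (fun k => ∫ x in B k, g (vlim x) ∂μ) atTop (𝓝 (∫ x, g (vlim x) ∂μ)) := by
      have hint : IntegrableOn (fun x => g (vlim x)) (⋃ k, B k) μ := by
        rw [hBunion, integrableOn_univ]; exact hgvlim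
      have h := tendsto_setIntegral_of_monotone hBmeas hBmono hint
      rwa [hBunion, setIntegral_univ] at h
    have hT2 : Tendsto (fun k => (μ ((B k)ᶜ)).toReal) atTop (𝓝 0) := by
      have h1 : Tendsto (fun k => μ ((B k)ᶜ)) atTop (𝓝 (μ (⋂ k, (B k)ᶜ))) :=
        tendsto_measure_iInter_atTop (fun k => (hBmeas k).compl.nullMeasurableSet)
          (fun k l hkl => Set.compl_subset_compl.mpr (hBmono hkl)) ⟨0, measure_ne_top μ _⟩
      rw [← Set.compl_iUnion, hBunion, Set.compl_univ, measure_empty] at h1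
      have h2 := (ENNReal.tendsto_toReal (by simp : (0:ENNReal) ≠ ⊤)).comp h1
      simpa [Function.comp_def] using h2
    have hT3 : Tendsto (fun k => ∫ x in (B k)ᶜ, vlim x ∂μ) atTop (𝓝 0) := by
      have hT3a : Tendsto (fun k => ∫ x in B k, vlim x ∂μ) atTop (𝓝 (∫ x, vlim x ∂μ)) := by
        have hint : IntegrableOn vlim (⋃ k, B k) μ := by
          rw [hBunion, integrableOn_univ]; exact hvlimint'
        have h := tendsto_setIntegral_of_monotone hBmeas hBmono hint
        rwa [hBunion, setIntegral_univ] at h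
      have heqk : ∀ k, ∫ x in (B k)ᶜ, vlim x ∂μ = ∫ x, vlim x ∂μ - ∫ x in B k, vlim x ∂μ := by
        intro k
        have h := integral_add_compl (hBmeas k) hvlimint'
        linarith
      have h := tendsto_const_nhds (x := ∫ x, vlim x ∂μ) (f := atTop (α := ℕ)) |>.sub hT3a
      rw [sub_self] at h
      exact h.congr fun k => (heqk k).symm
    -- choose K
    have hev1 : ∀ᶠ k : ℕ in atTop,
        |∫ x in B k, g (vlim x) ∂μ - ∫ x, g (vlim x) ∂μ| < δ/4 := by
      have := Metric.tendsto_nhds.mp hT1 (δ/4) (by linarith)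
      filter_upwards [this] with k hk
      rwa [Real.dist_eq] at hk
    have hev2 : ∀ᶠ k : ℕ in atTop, (|g 0| + 1) * (μ ((B k)ᶜ)).toReal < δ/4 := by
      have h := hT2.const_mul (|g 0| + 1)
      rw [mul_zero] at h
      have := Metric.tendsto_nhds.mp h (δ/4) (by linarith)
      filter_upwards [this] with k hk
      rw [Real.dist_eq, sub_zero] at hk
      exact lt_of_abs_lt hk
    have hev3 : ∀ᶠ k : ℕ in atTop, (|s0| + 1) * |∫ x in (B k)ᶜ, vlim x ∂μ| < δ/4 := by
      have h := hT3.const_mul (|s0| + 1)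
      rw [mul_zero] at h
      have := Metric.tendsto_nhds.mp h (δ/4) (by linarith)
      filter_upwards [this] with k hk
      rw [Real.dist_eq, sub_zero, abs_mul, abs_of_nonneg (by positivity : (0:ℝ) ≤ |s0| + 1)] at hk
      exact hk
    obtain ⟨K, hK1, hK2, hK3⟩ := (hev1.and (hev2.and hev3)).exists
    -- truncated subgradient test function
    set Φ : EuclideanSpace ℝ (Fin M) → ℝ :=
      fun x => if |vl x| ≤ (K:ℝ) then sg g (vl x) else s0 with hΦdef
    set Cf : EuclideanSpace ℝ (Fin M) → ℝ :=
      fun x => if |vl x| ≤ (K:ℝ) then g (vl x) - sg g (vl x) * vl x else g 0 with hCdef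
    have hsgmeas : Measurable (sg g) := (sg_mono hgc).measurable
    have hsetK : MeasurableSet {x | |vl x| ≤ (K:ℝ)} :=
      measurableSet_le hvlm.abs measurable_const
    have hΦmeas : Measurable Φ :=
      Measurable.ite hsetK (hsgmeas.comp hvlm) measurable_const
    have hCmeas : Measurable Cf :=
      Measurable.ite hsetK ((hgcont.measurable.comp hvlm).sub ((hsgmeas.comp hvlm).mul hvlm))
        measurable_const
    set Ms : ℝ := max |sg g (-(K:ℝ))| |sg g (K:ℝ)| with hMsdef
    have hMs0 : (0:ℝ) ≤ Ms := le_trans (abs_nonneg _) (le_max_left _ _)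
    obtain ⟨Mg, hMg⟩ := (isCompact_Icc (a := -(K:ℝ)) (b := (K:ℝ))).exists_bound_of_continuousOn
      hgcont.continuousOn
    have hΦbdd : ∀ x, |Φ x| ≤ max Ms |s0| := by
      intro x
      by_cases h : |vl x| ≤ (K:ℝ)
      · simp only [hΦdef, if_pos h]
        exact le_max_of_le_left (sg_abs_le hgc h)
      · simp only [hΦdef, if_neg h]
        exact le_max_right _ _
    have hCbdd : ∀ x, |Cf x| ≤ |Mg| + Ms * (K:ℝ) + |g 0| := by
      intro x
      by_cases h : |vl x| ≤ (K:ℝ)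
      · simp only [hCdef, if_pos h]
        have hmem : vl x ∈ Set.Icc (-(K:ℝ)) (K:ℝ) := Set.mem_Icc.mpr (abs_le.mp h)
        have h1 : |g (vl x)| ≤ |Mg| := le_trans (hMg (vl x) hmem) (le_abs_self Mg)
        have h2 : |sg g (vl x)| ≤ Ms := sg_abs_le hgc h
        have h3 : |sg g (vl x) * vl x| ≤ Ms * (K:ℝ) := by
          rw [abs_mul]
          exact mul_le_mul h2 h (abs_nonneg _) hMs0
        calc |g (vl x) - sg g (vl x) * vl x|
            = |g (vl x) + -(sg g (vl x) * vl x)| := by rw [sub_eq_add_neg]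
          _ ≤ |g (vl x)| + |-(sg g (vl x) * vl x)| := abs_add_le _ _
          _ = |g (vl x)| + |sg g (vl x) * vl x| := by rw [abs_neg]
          _ ≤ |Mg| + Ms * (K:ℝ) + |g 0| := by
              have := abs_nonneg (g 0); linarith
      · simp only [hCdef, if_neg h]
        have h1 : (0:ℝ) ≤ Ms * (K:ℝ) := mul_nonneg hMs0 (Nat.cast_nonneg K)
        have h2 := abs_nonneg Mg
        linarith
    have hpoint : ∀ x w, Cf x + Φ x * w ≤ g w := by
      intro x w
      by_cases h : |vl x| ≤ (K:ℝ)
      · simp only [hCdef, hΦdef, if_pos h]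
        have heq2 : g (vl x) - sg g (vl x) * vl x + sg g (vl x) * w
            = g (vl x) + sg g (vl x) * (w - vl x) := by ring
        rw [heq2]
        exact sg_subgrad hgc _ w
      · simp only [hCdef, hΦdef, if_neg h]
        have := sg_subgrad hgc 0 w
        simpa using this
    have hCint : Integrable Cf μ :=
      Integrable.mono' (integrable_const (|Mg| + Ms * (K:ℝ) + |g 0|))
        hCmeas.aestronglyMeasurable
        (Filter.Eventually.of_forall fun x => by rw [Real.norm_eq_abs]; exact hCbdd x)
    have hΦwint : ∀ n, Integrable (fun x => Φ x * ((v n x + vlim x)/2)) μ :=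
      fun n => (hwint n).bdd_mul hΦmeas.aestronglyMeasurable
        (Filter.Eventually.of_forall fun x => by rw [Real.norm_eq_abs]; exact hΦbdd x)
    have hvlΦ : Integrable (fun x => vlim x * Φ x) μ :=
      (hvlimint'.bdd_mul hΦmeas.aestronglyMeasurable
        (Filter.Eventually.of_forall fun x => by rw [Real.norm_eq_abs]; exact hΦbdd x)).congr
        (Filter.Eventually.of_forall fun x => mul_comm _ _)
    have hvΦ : ∀ n, Integrable (fun x => v n x * Φ x) μ :=
      fun n => ((hvint' n).bdd_mul hΦmeas.aestronglyMeasurable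
        (Filter.Eventually.of_forall fun x => by rw [Real.norm_eq_abs]; exact hΦbdd x)).congr
        (Filter.Eventually.of_forall fun x => mul_comm _ _)
    have hlow : ∀ n, ∫ x, Cf x ∂μ + ∫ x, Φ x * ((v n x + vlim x)/2) ∂μ
        ≤ ∫ x, g ((v n x + vlim x)/2) ∂μ := by
      intro n
      rw [← integral_add hCint (hΦwint n)]
      exact integral_mono (hCint.add (hΦwint n)) (hgwint n) fun x => hpoint x _
    have hweakΦ : Tendsto (fun n => ∫ x, Φ x * ((v n x + vlim x)/2) ∂μ) atTop
        (𝓝 (∫ x, vlim x * Φ x ∂μ)) := by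
      have h := hweakv Φ hΦmeas ⟨max Ms |s0|, hΦbdd⟩
      have heq2 : ∀ n, ∫ x, Φ x * ((v n x + vlim x)/2) ∂μ
          = (∫ x, v n x * Φ x ∂μ)/2 + (∫ x, vlim x * Φ x ∂μ)/2 := by
        intro n
        rw [← integral_div, ← integral_div, ← integral_add ((hvΦ n).div_const 2)
          (hvlΦ.div_const 2)]
        congr 1
        ext x
        ring
      have h2 : Tendsto (fun n => (∫ x, v n x * Φ x ∂μ)/2 + (∫ x, vlim x * Φ x ∂μ)/2) atTop
          (𝓝 ((∫ x, vlim x * Φ x ∂μ)/2 + (∫ x, vlim x * Φ x ∂μ)/2)) :=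
        (h.div_const 2).add tendsto_const_nhds
      rw [add_halves] at h2
      exact h2.congr fun n => (heq2 n).symm
    have hLeq : ∫ x, Cf x ∂μ + ∫ x, vlim x * Φ x ∂μ
        = (∫ x in B K, g (vlim x) ∂μ) + g 0 * (μ ((B K)ᶜ)).toReal
          + s0 * ∫ x in (B K)ᶜ, vlim x ∂μ := by
      have hae : (fun x => Cf x + vlim x * Φ x) =ᵐ[μ]
          fun x => (B K).indicator (fun x => g (vlim x)) x
            + ((B K)ᶜ).indicator (fun x => g 0 + s0 * vlim x) x := by
        filter_upwards [hvleq] with x hx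
        by_cases h : x ∈ B K
        · have h' : |vl x| ≤ (K:ℝ) := h
          rw [Set.indicator_of_mem h, Set.indicator_of_notMem (by simp [h] : x ∉ (B K)ᶜ)]
          simp only [hCdef, hΦdef, if_pos h']
          rw [hx]
          ring
        · have h' : ¬ |vl x| ≤ (K:ℝ) := h
          rw [Set.indicator_of_notMem h, Set.indicator_of_mem (Set.mem_compl h)]
          simp only [hCdef, hΦdef, if_neg h']
          ring
      rw [← integral_add hCint hvlΦ, integral_congr_ae hae]
      have hint1 : Integrable ((B K).indicator fun x => g (vlim x)) μ :=
        hgvlim.indicator (hBmeas K)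
      have hint2 : Integrable (((B K)ᶜ).indicator fun x => g 0 + s0 * vlim x) μ :=
        ((integrable_const _).add (hvlimint'.const_mul s0)).indicator (hBmeas K).compl
      have hsplit : ∫ x in (B K)ᶜ, (g 0 + s0 * vlim x) ∂μ
          = g 0 * (μ ((B K)ᶜ)).toReal + s0 * ∫ x in (B K)ᶜ, vlim x ∂μ := by
        rw [integral_add (integrable_const _) ((hvlimint'.const_mul s0).restrict),
          integral_const, integral_const_mul]
        simp only [smul_eq_mul, measureReal_def, Measure.restrict_apply_univ]
        ring
      rw [integral_add hint1 hint2, integral_indicator (hBmeas K),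
        integral_indicator (hBmeas K).compl, hsplit]
      ring
    -- conclusion of claim A
    have htR : (0:ℝ) ≤ (μ ((B K)ᶜ)).toReal := ENNReal.toReal_nonneg
    have e1 : ∫ x in B K, g (vlim x) ∂μ ≥ ∫ x, g (vlim x) ∂μ - δ/4 := by
      have := abs_lt.mp hK1
      linarith [this.1]
    have e2 : g 0 * (μ ((B K)ᶜ)).toReal ≥ -(δ/4) := by
      have h1 : |g 0 * (μ ((B K)ᶜ)).toReal| ≤ (|g 0| + 1) * (μ ((B K)ᶜ)).toReal := by
        rw [abs_mul, abs_of_nonneg htR]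
        exact mul_le_mul_of_nonneg_right (by linarith [abs_nonneg (g 0)] : |g 0| ≤ |g 0| + 1) htR
      have h2 := neg_abs_le (g 0 * (μ ((B K)ᶜ)).toReal)
      linarith [hK2]
    have e3 : s0 * ∫ x in (B K)ᶜ, vlim x ∂μ ≥ -(δ/4) := by
      have h1 : |s0 * ∫ x in (B K)ᶜ, vlim x ∂μ| ≤ (|s0| + 1) * |∫ x in (B K)ᶜ, vlim x ∂μ| := by
        rw [abs_mul]
        exact mul_le_mul_of_nonneg_right (by linarith [abs_nonneg s0]) (abs_nonneg _)
      have h2 := neg_abs_le (s0 * ∫ x in (B K)ᶜ, vlim x ∂μ)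
      linarith [hK3]
    have hevn : ∀ᶠ n in atTop, ∫ x, Φ x * ((v n x + vlim x)/2) ∂μ
        > ∫ x, vlim x * Φ x ∂μ - δ/4 := by
      have := Metric.tendsto_nhds.mp hweakΦ (δ/4) (by linarith)
      filter_upwards [this] with n hn
      rw [Real.dist_eq] at hn
      have := abs_lt.mp hn
      linarith [this.1]
    filter_upwards [hevn] with n hn
    have h := hlow n
    linarith [hLeq, e1, e2, e3]
  -- ∫ of the gap tends to 0
  have hDint : ∀ n, Integrable (fun x => cgap g (vlim x) (v n x)) μ := by
    intro n
    have heq3 : (fun x => cgap g (vlim x) (v n x))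
        = fun x => (g (v n x) + g (vlim x))/2 - g ((v n x + vlim x)/2) := rfl
    rw [heq3]
    exact (((hgvint' n).add hgvlim).div_const 2).sub (hgwint n)
  have hDnonneg : ∀ n x, 0 ≤ cgap g (vlim x) (v n x) := fun n x => cgap_nonneg hgc _ _
  have hDeq : ∀ n, ∫ x, cgap g (vlim x) (v n x) ∂μ
      = ((∫ x, g (v n x) ∂μ) + ∫ x, g (vlim x) ∂μ)/2 - ∫ x, g ((v n x + vlim x)/2) ∂μ := by
    intro n
    have heq3 : (fun x => cgap g (vlim x) (v n x))
        = fun x => (g (v n x) + g (vlim x))/2 - g ((v n x + vlim x)/2) := rfl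
    have hfi : Integrable (fun x => (g (v n x) + g (vlim x))/2) μ :=
      ((hgvint' n).add hgvlim).div_const 2
    have h4 : ∫ x, (g (v n x) + g (vlim x))/2 ∂μ
        = ((∫ x, g (v n x) ∂μ) + ∫ x, g (vlim x) ∂μ)/2 := by
      rw [← integral_add (hgvint' n) hgvlim, ← integral_div]
    rw [heq3, integral_sub hfi (hgwint n), h4]
  have hDto0 : Tendsto (fun n => ∫ x, cgap g (vlim x) (v n x) ∂μ) atTop (𝓝 0) := by
    rw [Metric.tendsto_atTop]
    intro ε hε
    have h1 : ∀ᶠ n in atTop, |∫ x, g (v n x) ∂μ - ∫ x, g (vlim x) ∂μ| < ε/2 := by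
      have := Metric.tendsto_nhds.mp hclaimB (ε/2) (by linarith)
      filter_upwards [this] with n hn
      rwa [Real.dist_eq] at hn
    have h2 := hclaimA (ε/4) (by linarith)
    rw [eventually_atTop] at h1 h2
    obtain ⟨N1, hN1⟩ := h1
    obtain ⟨N2, hN2⟩ := h2
    refine ⟨max N1 N2, fun n hn => ?_⟩
    have ha := hN1 n (le_trans (le_max_left _ _) hn)
    have hb := hN2 n (le_trans (le_max_right _ _) hn)
    have hnn : 0 ≤ ∫ x, cgap g (vlim x) (v n x) ∂μ :=
      integral_nonneg fun x => hDnonneg n x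
    rw [Real.dist_eq, sub_zero, abs_of_nonneg hnn, hDeq n]
    have := abs_lt.mp ha
    rw [hDeq n] at hnn
    linarith [this.2]
  -- convergence in measure of the gap
  have hDim : TendstoInMeasure μ (fun n x => cgap g (vlim x) (v n x)) atTop (fun _ => 0) := by
    rw [tendstoInMeasure_iff_dist]
    intro ε hε
    have key : ∀ n, μ {x | ε ≤ dist (cgap g (vlim x) (v n x)) ((fun _ => (0:ℝ)) x)}
        ≤ ENNReal.ofReal (ε⁻¹ * ∫ x, cgap g (vlim x) (v n x) ∂μ) := by
      intro n
      have hset : {x | ε ≤ dist (cgap g (vlim x) (v n x)) ((fun _ => (0:ℝ)) x)}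
          = {x | ε ≤ cgap g (vlim x) (v n x)} := by
        ext x
        rw [Set.mem_setOf_eq, Set.mem_setOf_eq, Real.dist_eq, sub_zero,
          abs_of_nonneg (hDnonneg n x)]
      rw [hset]
      have hm := mul_meas_ge_le_integral_of_nonneg
        (Filter.Eventually.of_forall (hDnonneg n)) (hDint n) ε
      have hne : μ {x | ε ≤ cgap g (vlim x) (v n x)} ≠ ⊤ := measure_ne_top μ _
      rw [← ENNReal.ofReal_toReal hne]
      apply ENNReal.ofReal_le_ofReal
      calc (μ {x | ε ≤ cgap g (vlim x) (v n x)}).toReal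
          = ε⁻¹ * (ε * (μ {x | ε ≤ cgap g (vlim x) (v n x)}).toReal) := by
            field_simp
        _ ≤ ε⁻¹ * ∫ x, cgap g (vlim x) (v n x) ∂μ :=
            mul_le_mul_of_nonneg_left hm (by positivity)
    have hlim : Tendsto (fun n => ENNReal.ofReal (ε⁻¹ * ∫ x, cgap g (vlim x) (v n x) ∂μ))
        atTop (𝓝 0) := by
      have h1 := hDto0.const_mul ε⁻¹
      rw [mul_zero] at h1
      have h2 := (ENNReal.continuous_ofReal.tendsto 0).comp h1
      simpa [Function.comp_def] using h2
    exact tendsto_of_tendsto_of_tendsto_of_le_of_le tendsto_const_nhds hlim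
      (fun n => zero_le) key
  obtain ⟨ns, hns, hae⟩ := hDim.exists_seq_tendsto_ae
  refine ⟨ns, hns, ?_⟩
  filter_upwards [hae] with y hy hyIoo
  exact tendsto_of_cgap hgc hgsc hyIoo (by simpa using hy)
end
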